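/- Let p : E → B be a Cartesian fibration of categories, B' ⊆ B a full subcategory, and e an object of E. Let E'_{/e} be the category of objects of E lying over B' equipped with a map to e, and let E''_{/e} ⊆ E'_{/e} be the full subcategory of objects whose map to e is p-Cartesian. Then the inclusion E''_{/e} → E'_{/e} admits the property that for every object φ of E'_{/e}, the comma category E''_{/e} ×_{E'_{/e}} (E'_{/e})_{φ/} has an initial object (in particular it is connected/contractible), so the inclusion is cofinal. -/

import Mathlib

open CategoryTheory

universe v u

variable {E B : Type u} [Category.{v} E] [Category.{v} B]

/-- A morphism `f : x ⟶ y` in `E` is `p`-Cartesian if every `g : z ⟶ y` factors uniquely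
through `f` over any given factorization of `p g` through `p f`. -/
def IsCartesianMor (p : E ⥤ B) {x y : E} (f : x ⟶ y) : Prop :=
  ∀ ⦃z : E⦄ (g : z ⟶ y) (u : p.obj z ⟶ p.obj x), u ≫ p.map f = p.map g →
    ∃! h : z ⟶ x, p.map h = u ∧ h ≫ f = g

/-- `p : E ⥤ B` is a Grothendieck (Cartesian) fibration: every morphism of `B` into the
image of an object of `E` admits a Cartesian lift. -/
def IsGrothendieckFibration (p : E ⥤ B) : Prop :=
  ∀ (y : E) (b : B) (f : b ⟶ p.obj y),
    ∃ (x : E) (g : x ⟶ y) (hx : p.obj x = b),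
      IsCartesianMor p g ∧ p.map g = eqToHom hx ≫ f

variable (p : E ⥤ B) (P : B → Prop) (e : E)

/-- The category `E'_{/e}` of objects of `E` lying over the full subcategory `B' ⊆ B`
(given by the predicate `P`) equipped with a map to `e`. -/
abbrev SlicePrime := ObjectProperty.FullSubcategory (fun ψ : Over e => P (p.obj ψ.left))

/-- The full subcategory `E''_{/e} ⊆ E'_{/e}` on those objects whose map to `e` is
`p`-Cartesian. -/
abbrev SliceDoublePrime :=
  ObjectProperty.FullSubcategory (fun ψ : Over e => P (p.obj ψ.left) ∧ IsCartesianMor p ψ.hom)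

/-- The inclusion `E''_{/e} → E'_{/e}`. -/
def sliceInclusion : SliceDoublePrime p P e ⥤ SlicePrime p P e where
  obj X := ⟨X.obj, X.property.1⟩
  map f := ObjectProperty.homMk f.hom

/-- For a Cartesian fibration `p : E → B`, a full subcategory `B' ⊆ B` and an object
`e ∈ E`, the inclusion `E''_{/e} → E'_{/e}` of the Cartesian morphisms to `e` has the
property that for every object `φ` of `E'_{/e}` the comma category
`E''_{/e} ×_{E'_{/e}} (E'_{/e})_{φ/}` has an initial object (in particular it is
connected), so the inclusion is cofinal. -/
theorem sliceInclusion_comma_hasInitial_and_final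
    (hp : IsGrothendieckFibration p) :
    (∀ φ : SlicePrime p P e,
      ∃ X : StructuredArrow φ (sliceInclusion p P e),
        Nonempty (Limits.IsInitial X)) ∧
    (sliceInclusion p P e).Final := by
  have key : ∀ φ : SlicePrime p P e,
      ∃ X : StructuredArrow φ (sliceInclusion p P e),
        Nonempty (Limits.IsInitial X) := by
    intro φ
    obtain ⟨x, g, hx, gcart, hpg⟩ := hp e (p.obj φ.obj.left) (p.map φ.obj.hom)
    obtain ⟨h, ⟨hph, hhg⟩, huniq⟩ := gcart φ.obj.hom (eqToHom hx.symm)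
      (by rw [hpg]; simp)
    refine ⟨StructuredArrow.mk
      (Y := (⟨Over.mk g, ⟨hx ▸ φ.property, gcart⟩⟩ : SliceDoublePrime p P e))
      (ObjectProperty.homMk (show φ.obj ⟶ Over.mk g from Over.homMk h hhg)), ⟨?_⟩⟩
    apply Limits.IsInitial.ofUniqueHom
    case h =>
      intro Y
      have ψcart : IsCartesianMor p Y.right.obj.hom := Y.right.property.2
      have hk : (Over.Hom.left (g := Y.right.obj) Y.hom.hom) ≫ Y.right.obj.hom = φ.obj.hom := Over.w Y.hom.hom
      have hex : ∃! m : x ⟶ Y.right.obj.left,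
          p.map m = eqToHom hx ≫ p.map (Over.Hom.left (g := Y.right.obj) Y.hom.hom) ∧ m ≫ Y.right.obj.hom = g :=
        ψcart g (eqToHom hx ≫ p.map (Over.Hom.left (g := Y.right.obj) Y.hom.hom))
          (by rw [Category.assoc, ← p.map_comp, hk, hpg])
      set m := hex.choose with hm
      have hpm : p.map m = eqToHom hx ≫ p.map (Over.Hom.left (g := Y.right.obj) Y.hom.hom) := hex.choose_spec.1.1
      have hmψ : m ≫ Y.right.obj.hom = g := hex.choose_spec.1.2
      have hcomm : h ≫ m = (Over.Hom.left (g := Y.right.obj) Y.hom.hom) := by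
        obtain ⟨c, -, cuniq⟩ := ψcart φ.obj.hom (p.map (Over.Hom.left (g := Y.right.obj) Y.hom.hom))
          (by rw [← p.map_comp, hk])
        have h1 : h ≫ m = c := cuniq _ ⟨by rw [p.map_comp, hph, hpm]; simp,
          by rw [Category.assoc, hmψ, hhg]⟩
        have h2 : (Over.Hom.left (g := Y.right.obj) Y.hom.hom) = c := cuniq _ ⟨rfl, hk⟩
        rw [h1, h2]
      exact StructuredArrow.homMk
        (ObjectProperty.homMk (show Over.mk g ⟶ Y.right.obj from Over.homMk m hmψ))
        (by apply ObjectProperty.hom_ext; apply Over.OverMorphism.ext; simpa [sliceInclusion] using hcomm)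
    case uniq =>
      intro Y f
      have ψcart : IsCartesianMor p Y.right.obj.hom := Y.right.property.2
      have hk : (Over.Hom.left (g := Y.right.obj) Y.hom.hom) ≫ Y.right.obj.hom = φ.obj.hom := Over.w Y.hom.hom
      have hex : ∃! m : x ⟶ Y.right.obj.left,
          p.map m = eqToHom hx ≫ p.map (Over.Hom.left (g := Y.right.obj) Y.hom.hom) ∧ m ≫ Y.right.obj.hom = g :=
        ψcart g (eqToHom hx ≫ p.map (Over.Hom.left (g := Y.right.obj) Y.hom.hom))
          (by rw [Category.assoc, ← p.map_comp, hk, hpg])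
      have muniq := hex.choose_spec.2
      set m := hex.choose with hm
      have hw : h ≫ f.right.hom.left = (Over.Hom.left (g := Y.right.obj) Y.hom.hom) := by
        have := StructuredArrow.w f
        exact congrArg (fun k => k.hom.left) this
      have hfm : f.right.hom.left = m := by
        apply muniq
        refine ⟨?_, Over.w f.right.hom⟩
        have : p.map h ≫ p.map f.right.hom.left = p.map (Over.Hom.left (g := Y.right.obj) Y.hom.hom) := by
          rw [← p.map_comp, hw]
        rw [hph] at this
        calc p.map f.right.hom.left
            = eqToHom hx ≫ eqToHom hx.symm ≫ p.map f.right.hom.left := by simp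
          _ = eqToHom hx ≫ p.map (Over.Hom.left (g := Y.right.obj) Y.hom.hom) := by rw [this]
      apply StructuredArrow.hom_ext
      apply ObjectProperty.hom_ext
      apply Over.OverMorphism.ext
      exact hfm
  exact ⟨key, ⟨fun φ => by
    obtain ⟨X, ⟨hX⟩⟩ := key φ
    have : Nonempty (StructuredArrow φ (sliceInclusion p P e)) := ⟨X⟩
    exact zigzag_isConnected fun j₁ j₂ =>
      Relation.ReflTransGen.trans
        (Relation.ReflTransGen.single (Or.inr ⟨hX.to j₁⟩))
        (Relation.ReflTransGen.single (Or.inl ⟨hX.to j₂⟩))⟩⟩
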